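/- Let $S^0$ be the semigroup $\mathscr{S}_n\ltimes(\mathbb{N}\times\mathbb{N})^n$ with adjoined zero, equipped with a Hausdorff locally compact non-discrete topology making multiplication separately continuous. Then for every open neighbourhood $U$ of $0$ the complement $S^0\setminus U$ is finite. -/

import Mathlib

/-- Elements of the semigroup `S = 𝒮ₙ ⋉ (ℕ × ℕ)ⁿ`: a permutation of
`{1,…,n}` together with a pair of tuples of positive integers. -/
abbrev Gel (n : ℕ) := Equiv.Perm (Fin n) × (Fin n → ℕ+) × (Fin n → ℕ+)

/-- The right action of a permutation on tuples: `((x)σ)_i = x_{σ⁻¹(i)}`. -/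
def ract {n : ℕ} (σ : Equiv.Perm (Fin n)) (x : Fin n → ℕ+) : Fin n → ℕ+ :=
  fun i => x (σ.symm i)

/-- The semidirect product operation
`(α,[x,y])·(β,[u,v]) = (α∘β, [(x)β + max{(y)β,u} - (y)β, v + max{(y)β,u} - u])`,
where `α∘β` is the composition of the permutations acting on the right
(first `α`, then `β`) and max and subtraction are coordinatewise. -/
def gmul {n : ℕ} (a b : Gel n) : Gel n :=
  (b.1 * a.1,
   fun i => ract b.1 a.2.1 i + max (ract b.1 a.2.2 i) (b.2.1 i) - ract b.1 a.2.2 i,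
   fun i => b.2.2 i + max (ract b.1 a.2.2 i) (b.2.1 i) - b.2.1 i)

/-- The semigroup with adjoined zero: `none` is the zero. -/
def gmul0 {n : ℕ} : Option (Gel n) → Option (Gel n) → Option (Gel n)
  | some a, some b => some (gmul a b)
  | _, _ => none

namespace CUF

lemma cmax (a b : ℕ+) : ((max a b : ℕ+) : ℕ) = max (a : ℕ) (b : ℕ) := by
  rcases le_total a b with h | h
  · rw [max_eq_right h, max_eq_right (show (a:ℕ) ≤ b from h)]
  · rw [max_eq_left h, max_eq_left (show (b:ℕ) ≤ a from h)]

lemma c1 : ((1:ℕ+):ℕ) = 1 := rfl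
lemma c2 : ((2:ℕ+):ℕ) = 2 := rfl

lemma keyL (x y u : ℕ+) : ((x + max y u - y : ℕ+) : ℕ) = (x : ℕ) + max (y : ℕ) (u : ℕ) - y := by
  have h1 : (0:ℕ) < (x:ℕ) := x.pos
  have h2 : (y:ℕ) ≤ max (y:ℕ) (u:ℕ) := le_max_left _ _
  rw [PNat.sub_coe, if_pos]
  · push_cast [cmax]; omega
  · exact_mod_cast (show (y:ℕ) < ((x + max y u : ℕ+):ℕ) by push_cast [cmax]; omega)

lemma keyR (v y u : ℕ+) : ((v + max y u - u : ℕ+) : ℕ) = (v : ℕ) + max (y : ℕ) (u : ℕ) - u := by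
  have h1 : (0:ℕ) < (v:ℕ) := v.pos
  have h2 : (u:ℕ) ≤ max (y:ℕ) (u:ℕ) := le_max_right _ _
  rw [PNat.sub_coe, if_pos]
  · push_cast [cmax]; omega
  · exact_mod_cast (show (u:ℕ) < ((v + max y u : ℕ+):ℕ) by push_cast [cmax]; omega)

lemma A1 (a : ℕ+) : 1 + max 1 a - 1 = a := by
  have := a.pos
  rw [← PNat.coe_inj, keyL]; push_cast [cmax]; omega

lemma A2 (a : ℕ+) : 2 + max 1 a - 1 = a + 1 := by
  have := a.pos
  rw [← PNat.coe_inj, keyL]; push_cast [cmax]; omega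

lemma A3 (a : ℕ+) (h : 2 ≤ a) : 1 + max 2 a - 2 = a - 1 := by
  have h' : (2:ℕ) ≤ (a:ℕ) := h
  rw [← PNat.coe_inj, keyL, PNat.sub_coe, if_pos (show (1:ℕ+) < a from h)]
  push_cast [cmax]; omega

lemma A4 (v a : ℕ+) : v + max 1 a - a = v := by
  have := a.pos
  rw [← PNat.coe_inj, keyR]; push_cast [cmax]; omega

lemma A5 (v a : ℕ+) (h : 2 ≤ a) : v + max 2 a - a = v := by
  have h' : (2:ℕ) ≤ (a:ℕ) := h
  rw [← PNat.coe_inj, keyR]; push_cast [cmax]; omega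

lemma A6 (u a : ℕ+) : u + max a 1 - a = u := by
  have := a.pos
  rw [← PNat.coe_inj, keyL]; push_cast [cmax]; omega

lemma A7 (a : ℕ+) : 2 + max a 1 - 1 = a + 1 := by
  have := a.pos
  rw [← PNat.coe_inj, keyR]; push_cast [cmax]; omega

lemma A8 (a : ℕ+) : 1 + max a 1 - 1 = a := by
  have := a.pos
  rw [← PNat.coe_inj, keyR]; push_cast [cmax]; omega

lemma A9 (u a : ℕ+) (h : 2 ≤ a) : u + max a 2 - a = u := by
  have h' : (2:ℕ) ≤ (a:ℕ) := h
  rw [← PNat.coe_inj, keyL]; push_cast [cmax]; omega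

lemma A10 (a : ℕ+) (h : 2 ≤ a) : 1 + max a 2 - 2 = a - 1 := by
  have h' : (2:ℕ) ≤ (a:ℕ) := h
  rw [← PNat.coe_inj, keyR, PNat.sub_coe, if_pos (show (1:ℕ+) < a from h)]
  push_cast [cmax]; omega

lemma cde (d e : ℕ+) : ((d + e - 1 : ℕ+):ℕ) = (d:ℕ) + e - 1 := by
  have hd := d.pos; have he := e.pos
  rw [PNat.sub_coe, if_pos]
  · push_cast; omega
  · exact_mod_cast (show ((1:ℕ+):ℕ) < ((d + e : ℕ+):ℕ) by push_cast [c1]; omega)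

lemma A11 (c d e : ℕ+) : c + max (d + e - 1) d - (d + e - 1) = c := by
  have hd : (0:ℕ) < (d:ℕ) := d.pos
  have he : (0:ℕ) < (e:ℕ) := e.pos
  rw [← PNat.coe_inj, keyL, cde]
  omega

lemma A12 (d e : ℕ+) : 1 + max (d + e - 1) d - d = e := by
  have hd : (0:ℕ) < (d:ℕ) := d.pos
  have he : (0:ℕ) < (e:ℕ) := e.pos
  rw [← PNat.coe_inj, keyR]
  push_cast [cmax, cde]; omega

lemma cPqp (P q p : ℕ+) (h : (p:ℕ) ≤ (P:ℕ)) : ((P + q - p : ℕ+):ℕ) = (P:ℕ) + q - p := by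
  have hq := q.pos
  rw [PNat.sub_coe, if_pos]
  · push_cast; omega
  · exact_mod_cast (show (p:ℕ) < ((P + q : ℕ+):ℕ) by push_cast; omega)

lemma A13 (p q P : ℕ+) (h : p ≤ P) : p + max q (P + q - p) - q = P := by
  have h' : (p:ℕ) ≤ (P:ℕ) := h
  have hq : (0:ℕ) < (q:ℕ) := q.pos
  rw [← PNat.coe_inj, keyL]
  push_cast [cmax, cPqp _ _ _ h']; omega

lemma A14 (p q P : ℕ+) (h : p ≤ P) : 1 + max q (P + q - p) - (P + q - p) = 1 := by
  have h' : (p:ℕ) ≤ (P:ℕ) := h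
  have hq : (0:ℕ) < (q:ℕ) := q.pos
  rw [← PNat.coe_inj, keyR]
  push_cast [cmax, cPqp _ _ _ h']; omega

variable {n : ℕ}

def gone (n : ℕ) : Fin n → ℕ+ := fun _ => 1

def gbump (j : Fin n) : Fin n → ℕ+ := fun i => if i = j then 2 else 1

lemma gone_apply (i : Fin n) : gone n i = 1 := rfl

lemma gbump_same (j : Fin n) : gbump j j = 2 := by simp [gbump]

lemma gbump_ne {i j : Fin n} (h : i ≠ j) : gbump j i = 1 := by simp [gbump, h]

lemma ract_ract (σ : Equiv.Perm (Fin n)) (x : Fin n → ℕ+) (i : Fin n) :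
    ract σ x (σ i) = x i := by
  simp [ract]

lemma ract_gone (σ : Equiv.Perm (Fin n)) : ract σ (gone n) = gone n := rfl

lemma ract_one (x : Fin n → ℕ+) : ract 1 x = x := rfl

lemma ract_gbump (σ : Equiv.Perm (Fin n)) (j i : Fin n) :
    ract σ (gbump (σ.symm j)) i = gbump j i := by
  simp only [ract, gbump]
  by_cases h : i = j
  · simp [h]
  · rw [if_neg, if_neg h]
    exact fun hh => h (σ.symm.injective hh)

lemma gmul_left (x y : Fin n → ℕ+) (β : Equiv.Perm (Fin n)) (u v : Fin n → ℕ+) :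
    gmul ((1 : Equiv.Perm (Fin n)), x, y) (β, u, v) =
      (β, (fun i => ract β x i + max (ract β y i) (u i) - ract β y i),
          (fun i => v i + max (ract β y i) (u i) - u i)) := by
  simp [gmul]

lemma gmul_right (w r : Fin n → ℕ+) (β : Equiv.Perm (Fin n)) (u v : Fin n → ℕ+) :
    gmul (β, u, v) ((1 : Equiv.Perm (Fin n)), w, r) =
      (β, (fun i => u i + max (v i) (w i) - v i),
          (fun i => r i + max (v i) (w i) - w i)) := by
  simp [gmul, ract_one]

def Lup (β : Equiv.Perm (Fin n)) (j : Fin n) : Gel n :=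
  ((1 : Equiv.Perm (Fin n)), gbump (β.symm j), gone n)

def Ldown (β : Equiv.Perm (Fin n)) (j : Fin n) : Gel n :=
  ((1 : Equiv.Perm (Fin n)), gone n, gbump (β.symm j))

def Rup (j : Fin n) : Gel n := ((1 : Equiv.Perm (Fin n)), gone n, gbump j)

def Rdown (j : Fin n) : Gel n := ((1 : Equiv.Perm (Fin n)), gbump j, gone n)

lemma M1 (β : Equiv.Perm (Fin n)) (j : Fin n) (u v : Fin n → ℕ+) :
    gmul (Lup β j) (β, u, v) = (β, Function.update u j (u j + 1), v) := by
  rw [Lup, gmul_left]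
  refine congrArg _ (congrArg₂ _ (funext fun i => ?_) (funext fun i => ?_))
  · rw [ract_gbump, ract_gone, gone_apply]
    rcases eq_or_ne i j with rfl | h
    · rw [gbump_same, Function.update_self, A2]
    · rw [gbump_ne h, Function.update_of_ne h, A1]
  · rw [ract_gone, gone_apply, A4]

lemma M2 (β : Equiv.Perm (Fin n)) (j : Fin n) (u v : Fin n → ℕ+) (hj : 2 ≤ u j) :
    gmul (Ldown β j) (β, u, v) = (β, Function.update u j (u j - 1), v) := by
  rw [Ldown, gmul_left]
  refine congrArg _ (congrArg₂ _ (funext fun i => ?_) (funext fun i => ?_))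
  · rw [ract_gbump, ract_gone, gone_apply]
    rcases eq_or_ne i j with rfl | h
    · rw [gbump_same, Function.update_self, A3 _ hj]
    · rw [gbump_ne h, Function.update_of_ne h, A1]
  · rw [ract_gbump]
    rcases eq_or_ne i j with rfl | h
    · rw [gbump_same, A5 _ _ hj]
    · rw [gbump_ne h, A4]

lemma M3 (j : Fin n) (β : Equiv.Perm (Fin n)) (u v : Fin n → ℕ+) :
    gmul (β, u, v) (Rup j) = (β, u, Function.update v j (v j + 1)) := by
  rw [Rup, gmul_right]
  refine congrArg _ (congrArg₂ _ (funext fun i => ?_) (funext fun i => ?_))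
  · rw [gone_apply, A6]
  · rw [gone_apply]
    rcases eq_or_ne i j with rfl | h
    · rw [gbump_same, Function.update_self, A7]
    · rw [gbump_ne h, Function.update_of_ne h, A8]

lemma M4 (j : Fin n) (β : Equiv.Perm (Fin n)) (u v : Fin n → ℕ+) (hj : 2 ≤ v j) :
    gmul (β, u, v) (Rdown j) = (β, u, Function.update v j (v j - 1)) := by
  rw [Rdown, gmul_right]
  refine congrArg _ (congrArg₂ _ (funext fun i => ?_) (funext fun i => ?_))
  · rcases eq_or_ne i j with rfl | h
    · rw [gbump_same, A9 _ _ hj]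
    · rw [gbump_ne h, A6]
  · rw [gone_apply]
    rcases eq_or_ne i j with rfl | h
    · rw [gbump_same, Function.update_self, A10 _ hj]
    · rw [gbump_ne h, Function.update_of_ne h, A8]

lemma M5 (δ β : Equiv.Perm (Fin n)) (x y : Fin n → ℕ+) :
    gmul (β, x, y) (δ, gone n, gone n) = (δ * β, ract δ x, ract δ y) := by
  unfold gmul
  refine congrArg _ (congrArg₂ _ (funext fun i => ?_) (funext fun i => ?_))
  · show ract δ x i + max (ract δ y i) (gone n i) - ract δ y i = ract δ x i
    rw [gone_apply, A6]
  · show gone n i + max (ract δ y i) (gone n i) - gone n i = ract δ y i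
    rw [gone_apply, A8]

lemma M6 (c d : Gel n) (hd : d.2.2 = gone n) : ∃ a, gmul a d = c := by
  obtain ⟨δ, p, q⟩ := d
  obtain ⟨γ, s, r⟩ := c
  simp only at hd
  subst hd
  refine ⟨(δ⁻¹ * γ, fun k => s (δ k), fun k => p (δ k) + r (δ k) - 1), ?_⟩
  unfold gmul
  refine congrArg₂ _ ?_ (congrArg₂ _ (funext fun i => ?_) (funext fun i => ?_))
  · simp [mul_assoc]
  · show (fun k => s (δ k)) (δ.symm i) + max ((fun k => p (δ k) + r (δ k) - 1) (δ.symm i)) (p i) -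
      (fun k => p (δ k) + r (δ k) - 1) (δ.symm i) = s i
    simp only [Equiv.apply_symm_apply]
    rw [A11]
  · show gone n i + max ((fun k => p (δ k) + r (δ k) - 1) (δ.symm i)) (p i) - p i = r i
    simp only [Equiv.apply_symm_apply, gone_apply]
    rw [A12]

lemma M7 (b : Gel n) : ∃ a P, gmul b a = (b.1, fun _ => P, gone n) := by
  obtain ⟨γ, p, q⟩ := b
  have hP : ∀ i, p i ≤ (⟨(∑ i, (p i : ℕ)) + 1, Nat.succ_pos _⟩ : ℕ+) := by
    intro i
    have : (p i : ℕ) ≤ ∑ i, (p i : ℕ) :=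
      Finset.single_le_sum (f := fun i => (p i : ℕ)) (fun i _ => Nat.zero_le _) (Finset.mem_univ i)
    exact (PNat.coe_le_coe _ _).1 (by simpa using Nat.le_succ_of_le this)
  set P : ℕ+ := ⟨(∑ i, (p i : ℕ)) + 1, Nat.succ_pos _⟩ with hPdef
  refine ⟨((1 : Equiv.Perm (Fin n)), fun i => P + q i - p i, gone n), P, ?_⟩
  rw [gmul_right]
  refine congrArg _ (congrArg₂ _ (funext fun i => ?_) (funext fun i => ?_))
  · exact A13 _ _ _ (hP i)
  · rw [gone_apply]; exact A14 _ _ _ (hP i)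



lemma pnat_Iic_finite (b : ℕ+) : (Set.Iic b).Finite := by
  have h : Set.Iic b ⊆ (fun x : ℕ+ => (x : ℕ)) ⁻¹' Set.Iic (b : ℕ) := by
    intro x hx
    exact (PNat.coe_le_coe _ _).2 hx
  exact ((Set.finite_Iic (b : ℕ)).preimage PNat.coe_injective.injOn).subset h

lemma finite_box {ι : Type*} [Finite ι] (B : ι → ℕ+) :
    {p : ι → ℕ+ | ∀ i, p i ≤ B i}.Finite := by
  have h := Set.Finite.pi (t := fun i => Set.Iic (B i)) (fun i => pnat_Iic_finite _)
  refine h.subset fun p hp => ?_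
  simp only [Set.mem_pi, Set.mem_univ, forall_true_left, Set.mem_Iic]
  exact hp

variable {n : ℕ}

lemma finite_gel_box (β0 : Equiv.Perm (Fin n)) (B1 B2 : Fin n → ℕ+) :
    {x : Gel n | x.1 = β0 ∧ (∀ i, x.2.1 i ≤ B1 i) ∧ (∀ i, x.2.2 i ≤ B2 i)}.Finite := by
  have h := ((finite_box B1).prod (finite_box B2)).image
    (fun p : (Fin n → ℕ+) × (Fin n → ℕ+) => ((β0, p.1, p.2) : Gel n))
  refine h.subset ?_
  rintro ⟨β, u, v⟩ ⟨rfl, h1, h2⟩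
  exact ⟨(u, v), Set.mk_mem_prod h1 h2, rfl⟩

lemma ftL (a c : Gel n) : {x : Gel n | gmul a x = c}.Finite := by
  obtain ⟨α, xa, ya⟩ := a
  obtain ⟨γ, s, r⟩ := c
  apply (finite_gel_box (γ * α⁻¹) (fun i => s i + ract (γ * α⁻¹) ya i) (fun i => r i)).subset
  rintro ⟨β, u, v⟩ hx
  simp only [Set.mem_setOf_eq] at hx
  have h1 : β * α = γ := congrArg Prod.fst hx
  have hβ : β = γ * α⁻¹ := by rw [← h1, mul_inv_cancel_right]
  subst hβ
  have h2 : (fun i => ract (γ * α⁻¹) xa i + max (ract (γ * α⁻¹) ya i) (u i)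
      - ract (γ * α⁻¹) ya i) = s := congrArg (fun z : Gel n => z.2.1) hx
  have h3 : (fun i => v i + max (ract (γ * α⁻¹) ya i) (u i) - u i) = r :=
    congrArg (fun z : Gel n => z.2.2) hx
  refine ⟨rfl, fun i => ?_, fun i => ?_⟩
  · have hc := congrArg (fun z : ℕ+ => (z : ℕ)) (congrFun h2 i)
    rw [keyL] at hc
    show u i ≤ s i + ract (γ * α⁻¹) ya i
    apply (PNat.coe_le_coe _ _).1
    have hA : 0 < (ract (γ * α⁻¹) xa i : ℕ) := (ract (γ * α⁻¹) xa i).pos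
    have hm1 : ((ract (γ * α⁻¹) ya i : ℕ)) ≤
        max ((ract (γ * α⁻¹) ya i : ℕ)) ((u i : ℕ)) := le_max_left _ _
    have hm2 : ((u i : ℕ)) ≤ max ((ract (γ * α⁻¹) ya i : ℕ)) ((u i : ℕ)) := le_max_right _ _
    push_cast
    omega
  · have hc := congrArg (fun z : ℕ+ => (z : ℕ)) (congrFun h3 i)
    rw [keyR] at hc
    show v i ≤ r i
    apply (PNat.coe_le_coe _ _).1
    have hm1 : ((ract (γ * α⁻¹) ya i : ℕ)) ≤
        max ((ract (γ * α⁻¹) ya i : ℕ)) ((u i : ℕ)) := le_max_left _ _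
    have hm2 : ((u i : ℕ)) ≤ max ((ract (γ * α⁻¹) ya i : ℕ)) ((u i : ℕ)) := le_max_right _ _
    omega

lemma ftR (a c : Gel n) : {x : Gel n | gmul x a = c}.Finite := by
  obtain ⟨α, xa, ya⟩ := a
  obtain ⟨γ, s, r⟩ := c
  apply (finite_gel_box (α⁻¹ * γ) (fun k => s (α k)) (fun k => r (α k) + xa (α k))).subset
  rintro ⟨β, u, v⟩ hx
  simp only [Set.mem_setOf_eq] at hx
  have h1 : α * β = γ := congrArg Prod.fst hx
  have hβ : β = α⁻¹ * γ := by rw [← h1, inv_mul_cancel_left]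
  subst hβ
  have h2 : (fun i => ract α u i + max (ract α v i) (xa i) - ract α v i) = s :=
    congrArg (fun z : Gel n => z.2.1) hx
  have h3 : (fun i => ya i + max (ract α v i) (xa i) - xa i) = r :=
    congrArg (fun z : Gel n => z.2.2) hx
  refine ⟨rfl, fun k => ?_, fun k => ?_⟩
  · have hc := congrArg (fun z : ℕ+ => (z : ℕ)) (congrFun h2 (α k))
    rw [keyL] at hc
    have hru : ract α u (α k) = u k := by simp [ract]
    have hrv : ract α v (α k) = v k := by simp [ract]
    rw [hru, hrv] at hc
    show u k ≤ s (α k)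
    apply (PNat.coe_le_coe _ _).1
    have hm1 : ((v k : ℕ)) ≤ max ((v k : ℕ)) ((xa (α k) : ℕ)) := le_max_left _ _
    have hA : 0 < ((u k : ℕ)) := (u k).pos
    omega
  · have hc := congrArg (fun z : ℕ+ => (z : ℕ)) (congrFun h3 (α k))
    rw [keyR] at hc
    have hrv : ract α v (α k) = v k := by simp [ract]
    rw [hrv] at hc
    show v k ≤ r (α k) + xa (α k)
    apply (PNat.coe_le_coe _ _).1
    have hm1 : ((v k : ℕ)) ≤ max ((v k : ℕ)) ((xa (α k) : ℕ)) := le_max_left _ _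
    have hA : 0 < ((ya (α k) : ℕ)) := (ya (α k)).pos
    push_cast
    omega

/-- The grid lemma. -/
lemma grid {ι : Type*} [Fintype ι] [DecidableEq ι] {i₀ i₁ : ι} (h01 : i₀ ≠ i₁)
    {T F : Set (ι → ℕ+)} (hT : T.Infinite) (hF : F.Finite)
    (hup : ∀ t ∈ T, t ∉ F → ∀ j, Function.update t j (t j + 1) ∈ T)
    (hdown : ∀ t ∈ T, t ∉ F → ∀ j, 2 ≤ t j → Function.update t j (t j - 1) ∈ T) :
    Tᶜ.Finite := by
  classical
  obtain ⟨M, hM⟩ : ∃ M : ℕ+, ∀ f ∈ F, ∀ i, (f i : ℕ) < (M : ℕ) := by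
    refine ⟨⟨(hF.toFinset.sup fun f => Finset.univ.sup fun i => (f i : ℕ)) + 1,
      Nat.succ_pos _⟩, fun f hf i => ?_⟩
    have h1 : (f i : ℕ) ≤ Finset.univ.sup fun i => (f i : ℕ) :=
      Finset.le_sup (f := fun i => (f i : ℕ)) (Finset.mem_univ i)
    have h2 : (Finset.univ.sup fun i => (f i : ℕ)) ≤
        hF.toFinset.sup fun f => Finset.univ.sup fun i => (f i : ℕ) :=
      Finset.le_sup (f := fun f : ι → ℕ+ => Finset.univ.sup fun i => (f i : ℕ))
        (hF.mem_toFinset.2 hf)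
    simpa using Nat.lt_succ_of_le (h1.trans h2)
  have hguard : ∀ p : ι → ℕ+, ∀ i, M ≤ p i → p ∉ F := by
    intro p i h hp
    exact absurd ((PNat.coe_le_coe _ _).2 h) (not_le.2 (hM p hp i))
  have raise : ∀ t, t ∈ T → ∀ g, M ≤ t g → ∀ j (c : ℕ+), t j ≤ c →
      Function.update t j c ∈ T := by
    intro t ht g hg j c hc
    obtain ⟨m, hm⟩ : ∃ m : ℕ, (c : ℕ) = (t j : ℕ) + m := ⟨(c : ℕ) - (t j : ℕ), by
      have : (t j : ℕ) ≤ (c : ℕ) := hc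
      omega⟩
    clear hc
    induction m generalizing c with
    | zero =>
      have : c = t j := PNat.coe_inj.1 (by omega)
      subst this
      simpa [Function.update_eq_self] using ht
    | succ m ih =>
      set c' : ℕ+ := ⟨(t j : ℕ) + m, by positivity⟩ with hc'
      have hc'' : (c' : ℕ) = (t j : ℕ) + m := rfl
      have h1 : Function.update t j c' ∈ T := ih c' hc''
      have h2 : M ≤ Function.update t j c' g := by
        rcases eq_or_ne g j with rfl | hgj
        · rw [Function.update_self]
          exact le_trans hg ((PNat.coe_le_coe _ _).1 (by rw [hc'']; omega))
        · rwa [Function.update_of_ne hgj]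
      have h3 := hup _ h1 (hguard _ g h2) j
      rw [Function.update_self, Function.update_idem] at h3
      have : c' + 1 = c := PNat.coe_inj.1 (by push_cast [hc'']; omega)
      rwa [this] at h3
  have lower : ∀ t, t ∈ T → ∀ g j, g ≠ j → M ≤ t g → ∀ c : ℕ+, c ≤ t j →
      Function.update t j c ∈ T := by
    intro t ht g j hgj hg c hc
    obtain ⟨m, hm⟩ : ∃ m : ℕ, (t j : ℕ) = (c : ℕ) + m := ⟨(t j : ℕ) - (c : ℕ), by
      have : (c : ℕ) ≤ (t j : ℕ) := hc
      omega⟩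
    clear hc
    induction m generalizing c with
    | zero =>
      have : c = t j := PNat.coe_inj.1 (by omega)
      subst this
      simpa [Function.update_eq_self] using ht
    | succ m ih =>
      have h1 : Function.update t j (c + 1) ∈ T := ih (c + 1) (by push_cast; omega)
      have h2 : M ≤ Function.update t j (c + 1) g := by
        rwa [Function.update_of_ne hgj]
      have h25 : (2 : ℕ+) ≤ Function.update t j (c + 1) j := by
        rw [Function.update_self]
        exact (PNat.coe_le_coe _ _).1 (by have := c.pos; push_cast [c2]; omega)
      have h3 := hdown _ h1 (hguard _ g h2) j h25
      rw [Function.update_self, Function.update_idem] at h3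
      have hone : (1 : ℕ+) < c + 1 :=
        (PNat.coe_lt_coe _ _).1 (by have := c.pos; push_cast [c1]; omega)
      have : c + 1 - 1 = c := PNat.coe_inj.1 (by
        rw [PNat.sub_coe, if_pos hone]
        push_cast [c1]
        omega)
      rwa [this] at h3
  have raiseF : ∀ s : Finset ι, ∀ t, t ∈ T → ∀ g, M ≤ t g → ∀ b : ι → ℕ+,
      (∀ i, t i ≤ b i) → (fun i => if i ∈ s then b i else t i) ∈ T := by
    intro s
    induction s using Finset.induction_on with
    | empty => intro t ht g hg b hb; simpa using ht
    | @insert j s hj ih =>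
      intro t ht g hg b hb
      have h1 : Function.update t j (b j) ∈ T := raise t ht g hg j (b j) (hb j)
      have hg' : M ≤ Function.update t j (b j) g := by
        rcases eq_or_ne g j with rfl | hgj
        · rw [Function.update_self]
          exact le_trans hg (hb g)
        · rwa [Function.update_of_ne hgj]
      have hb' : ∀ i, Function.update t j (b j) i ≤ b i := by
        intro i
        rcases eq_or_ne i j with rfl | hij
        · rw [Function.update_self]
        · rw [Function.update_of_ne hij]
          exact hb i
      have h2 := ih _ h1 g hg' b hb'
      have heq : (fun i => if i ∈ s then b i else Function.update t j (b j) i) =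
          (fun i => if i ∈ insert j s then b i else t i) := by
        funext i
        rcases eq_or_ne i j with rfl | hij
        · by_cases h : i ∈ s <;> simp [h, Function.update_self]
        · simp [Function.update_of_ne hij, Finset.mem_insert, hij]
      rwa [heq] at h2
  have lowerF : ∀ s : Finset ι, ∀ t, t ∈ T → ∀ g, g ∉ s → M ≤ t g → ∀ p : ι → ℕ+,
      (∀ i, p i ≤ t i) → (fun i => if i ∈ s then p i else t i) ∈ T := by
    intro s
    induction s using Finset.induction_on with
    | empty => intro t ht g _ hg p hp; simpa using ht
    | @insert j s hj ih =>
      intro t ht g hgs hg p hp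
      have hgj : g ≠ j := fun h => hgs (h ▸ Finset.mem_insert_self j s)
      have hgs' : g ∉ s := fun h => hgs (Finset.mem_insert_of_mem h)
      have h1 : Function.update t j (p j) ∈ T := lower t ht g j hgj hg (p j) (hp j)
      have hg' : M ≤ Function.update t j (p j) g := by rwa [Function.update_of_ne hgj]
      have hp' : ∀ i, p i ≤ Function.update t j (p j) i := by
        intro i
        rcases eq_or_ne i j with rfl | hij
        · rw [Function.update_self]
        · rw [Function.update_of_ne hij]
          exact hp i
      have h2 := ih _ h1 g hgs' hg' p hp'
      have heq : (fun i => if i ∈ s then p i else Function.update t j (p j) i) =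
          (fun i => if i ∈ insert j s then p i else t i) := by
        funext i
        rcases eq_or_ne i j with rfl | hij
        · by_cases h : i ∈ s <;> simp [h, Function.update_self]
        · simp [Function.update_of_ne hij, Finset.mem_insert, hij]
      rwa [heq] at h2
  have hbig : ∀ p : ι → ℕ+, (∃ i, M ≤ p i) → p ∈ T := by
    rintro p ⟨js, hjs⟩
    obtain ⟨t0, ht0, istar, histar⟩ : ∃ t ∈ T, ∃ i, M ≤ t i := by
      by_contra h
      push_neg at h
      exact hT ((finite_box fun _ => M).subset fun t ht i => (h t ht i).le)
    set b : ι → ℕ+ := fun i => max (t0 i) (max (p i) M) with hb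
    have hbT : b ∈ T := by
      have h := raiseF Finset.univ t0 ht0 istar histar b (fun i => le_max_left _ _)
      simpa using h
    have hbM : ∀ i, M ≤ b i := fun i => le_trans (le_max_right _ _) (le_max_right _ _)
    set g0 : ι := if js = i₀ then i₁ else i₀ with hg0
    have hg0j : g0 ≠ js := by
      by_cases h : js = i₀
      · rw [hg0, if_pos h, h]
        exact Ne.symm h01
      · rw [hg0, if_neg h]
        exact fun hh => h hh.symm
    have h1 : Function.update b js (p js) ∈ T :=
      lower b hbT g0 js hg0j (hbM g0) (p js) (le_trans (le_max_left _ _) (le_max_right _ _))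
    have hgv : M ≤ Function.update b js (p js) js := by
      rw [Function.update_self]
      exact hjs
    have hp' : ∀ i, p i ≤ Function.update b js (p js) i := by
      intro i
      rcases eq_or_ne i js with rfl | hij
      · rw [Function.update_self]
      · rw [Function.update_of_ne hij]
        exact le_trans (le_max_left _ _) (le_max_right _ _)
    have h2 := lowerF (Finset.univ.erase js) _ h1 js (Finset.notMem_erase _ _) hgv p hp'
    have heq : (fun i => if i ∈ Finset.univ.erase js then p i
        else Function.update b js (p js) i) = p := by
      funext i
      rcases eq_or_ne i js with rfl | hij
      · simp [Function.update_self]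
      · simp [Finset.mem_erase, hij]
    rwa [heq] at h2
  refine (finite_box fun _ => M).subset fun p hp i => ?_
  by_contra h
  exact hp (hbig p ⟨i, (not_le.1 h).le⟩)



variable {n : ℕ}

def emb (β : Equiv.Perm (Fin n)) (p : (Fin n → ℕ+) × (Fin n → ℕ+)) : Gel n := (β, p.1, p.2)

lemma emb_inj (β : Equiv.Perm (Fin n)) : Function.Injective (emb β) := by
  intro p q h
  have h1 : p.1 = q.1 := congrArg (fun z : Gel n => z.2.1) h
  have h2 : p.2 = q.2 := congrArg (fun z : Gel n => z.2.2) h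
  exact Prod.ext h1 h2

def toP (t : Fin n ⊕ Fin n → ℕ+) : (Fin n → ℕ+) × (Fin n → ℕ+) :=
  (fun i => t (Sum.inl i), fun i => t (Sum.inr i))

def ofP (p : (Fin n → ℕ+) × (Fin n → ℕ+)) : Fin n ⊕ Fin n → ℕ+ := Sum.elim p.1 p.2

lemma of_to (t : Fin n ⊕ Fin n → ℕ+) : ofP (toP t) = t := by
  funext i
  cases i <;> rfl

lemma to_of (p : (Fin n → ℕ+) × (Fin n → ℕ+)) : toP (ofP p) = p := rfl

lemma toP_inj : Function.Injective (toP (n := n)) := by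
  intro a b h
  rw [← of_to a, ← of_to b, h]

lemma ofP_inj : Function.Injective (ofP (n := n)) := by
  intro a b h
  rw [← to_of a, ← to_of b, h]

lemma updl (t : Fin n ⊕ Fin n → ℕ+) (j : Fin n) (c : ℕ+) :
    toP (Function.update t (Sum.inl j) c) = (Function.update (toP t).1 j c, (toP t).2) := by
  refine Prod.ext (funext fun i => ?_) (funext fun i => ?_)
  · show Function.update t (Sum.inl j) c (Sum.inl i) = Function.update (toP t).1 j c i
    rcases eq_or_ne i j with rfl | h
    · rw [Function.update_self, Function.update_self]
    · rw [Function.update_of_ne (fun hh => h (Sum.inl.inj hh)),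
        Function.update_of_ne h]
      rfl
  · show Function.update t (Sum.inl j) c (Sum.inr i) = t (Sum.inr i)
    exact Function.update_of_ne (by simp) _ _

lemma updr (t : Fin n ⊕ Fin n → ℕ+) (j : Fin n) (c : ℕ+) :
    toP (Function.update t (Sum.inr j) c) = ((toP t).1, Function.update (toP t).2 j c) := by
  refine Prod.ext (funext fun i => ?_) (funext fun i => ?_)
  · show Function.update t (Sum.inr j) c (Sum.inl i) = t (Sum.inl i)
    exact Function.update_of_ne (by simp) _ _
  · show Function.update t (Sum.inr j) c (Sum.inr i) = Function.update (toP t).2 j c i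
    rcases eq_or_ne i j with rfl | h
    · rw [Function.update_self, Function.update_self]
    · rw [Function.update_of_ne (fun hh => h (Sum.inr.inj hh)),
        Function.update_of_ne h]
      rfl

lemma infinite_transfer {α β' : Type*} {A : Set α} {B : Set β'} (f : α → β')
    (hf : Function.Injective f) (hA : A.Infinite) (h : ∀ a ∈ A, f a ∈ B) : B.Infinite := by
  have h1 : (f '' A).Infinite := hA.image hf.injOn
  exact h1.mono (by rintro _ ⟨a, ha, rfl⟩; exact h a ha)

lemma slices_infinite (T : Set (Gel n))
    (hstabR : ∀ a : Gel n, {t : Gel n | t ∈ T ∧ gmul t a ∉ T}.Finite)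
    (hTinf : T.Infinite) : ∀ β, ((emb β) ⁻¹' T).Infinite := by
  have hex : ∃ β, ((emb β) ⁻¹' T).Infinite := by
    by_contra h
    push_neg at h
    apply hTinf
    have hsub : T ⊆ ⋃ β : Equiv.Perm (Fin n), emb β '' ((emb β) ⁻¹' T) := by
      intro g hg
      exact Set.mem_iUnion.2 ⟨g.1, (g.2.1, g.2.2), hg, rfl⟩
    exact (Set.finite_iUnion fun β => (h β).image _).subset hsub
  obtain ⟨β1, hβ1⟩ := hex
  intro β
  have hEfin : ((emb β1) ⁻¹'
      {t : Gel n | t ∈ T ∧ gmul t (β * β1⁻¹, gone n, gone n) ∉ T}).Finite :=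
    (hstabR _).preimage (emb_inj β1).injOn
  have hinj : Function.Injective
      (fun p : (Fin n → ℕ+) × (Fin n → ℕ+) => (ract (β * β1⁻¹) p.1, ract (β * β1⁻¹) p.2)) := by
    intro p q h
    have h1 : ract (β * β1⁻¹) p.1 = ract (β * β1⁻¹) q.1 := congrArg Prod.fst h
    have h2 : ract (β * β1⁻¹) p.2 = ract (β * β1⁻¹) q.2 := congrArg Prod.snd h
    refine Prod.ext (funext fun i => ?_) (funext fun i => ?_)
    · have h3 := congrFun h1 ((β * β1⁻¹) i)
      rw [ract_ract, ract_ract] at h3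
      exact h3
    · have h3 := congrFun h2 ((β * β1⁻¹) i)
      rw [ract_ract, ract_ract] at h3
      exact h3
  apply infinite_transfer _ hinj (hβ1.diff hEfin)
  rintro p ⟨hp1, hp2⟩
  have h1 : emb β1 p ∈ T := hp1
  have h2 : gmul (emb β1 p) (β * β1⁻¹, gone n, gone n) ∈ T := by
    by_contra h
    exact hp2 ⟨h1, h⟩
  show emb β (ract (β * β1⁻¹) p.1, ract (β * β1⁻¹) p.2) ∈ T
  have h3 : gmul (emb β1 p) (β * β1⁻¹, gone n, gone n) =
      (β * β1⁻¹ * β1, ract (β * β1⁻¹) p.1, ract (β * β1⁻¹) p.2) := M5 _ _ _ _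
  rw [h3, inv_mul_cancel_right] at h2
  exact h2

lemma slice_cofinite (hn : n ≠ 0) (T : Set (Gel n))
    (hstabL : ∀ a : Gel n, {t : Gel n | t ∈ T ∧ gmul a t ∉ T}.Finite)
    (hstabR : ∀ a : Gel n, {t : Gel n | t ∈ T ∧ gmul t a ∉ T}.Finite)
    (β : Equiv.Perm (Fin n)) (hβ : ((emb β) ⁻¹' T).Infinite) :
    (((emb β) ⁻¹' T)ᶜ).Finite := by
  classical
  have j0 : Fin n := ⟨0, Nat.pos_of_ne_zero hn⟩
  set T' : Set (Fin n ⊕ Fin n → ℕ+) := toP ⁻¹' ((emb β) ⁻¹' T) with hT'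
  set Fg : Set (Gel n) := ⋃ j : Fin n,
      ({t : Gel n | t ∈ T ∧ gmul (Lup β j) t ∉ T} ∪
       {t : Gel n | t ∈ T ∧ gmul (Ldown β j) t ∉ T} ∪
       {t : Gel n | t ∈ T ∧ gmul t (Rup j) ∉ T} ∪
       {t : Gel n | t ∈ T ∧ gmul t (Rdown j) ∉ T}) with hFg
  have hFgfin : Fg.Finite := Set.finite_iUnion fun j =>
    (((hstabL _).union (hstabL _)).union (hstabR _)).union (hstabR _)
  set F' : Set (Fin n ⊕ Fin n → ℕ+) := toP ⁻¹' ((emb β) ⁻¹' Fg) with hF'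
  have hF'fin : F'.Finite :=
    (hFgfin.preimage (emb_inj β).injOn).preimage toP_inj.injOn
  have hT'inf : T'.Infinite := by
    apply infinite_transfer ofP ofP_inj hβ
    intro p hp
    show toP (ofP p) ∈ (emb β) ⁻¹' T
    rw [to_of]
    exact hp
  have hup : ∀ t ∈ T', t ∉ F' → ∀ j, Function.update t j (t j + 1) ∈ T' := by
    intro t ht htF j
    have h1 : emb β (toP t) ∈ T := ht
    cases j with
    | inl jl =>
      have h2 : gmul (Lup β jl) (emb β (toP t)) ∈ T := by
        by_contra h
        exact htF (Set.mem_iUnion.2 ⟨jl, Or.inl (Or.inl (Or.inl ⟨h1, h⟩))⟩)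
      have h3 : gmul (Lup β jl) (emb β (toP t)) =
          (β, Function.update (toP t).1 jl ((toP t).1 jl + 1), (toP t).2) := M1 β jl _ _
      show toP (Function.update t (Sum.inl jl) (t (Sum.inl jl) + 1)) ∈ (emb β) ⁻¹' T
      rw [show t (Sum.inl jl) = (toP t).1 jl from rfl, updl]
      show (β, Function.update (toP t).1 jl ((toP t).1 jl + 1), (toP t).2) ∈ T
      rw [← h3]
      exact h2
    | inr jr =>
      have h2 : gmul (emb β (toP t)) (Rup jr) ∈ T := by
        by_contra h
        exact htF (Set.mem_iUnion.2 ⟨jr, Or.inl (Or.inr ⟨h1, h⟩)⟩)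
      have h3 : gmul (emb β (toP t)) (Rup jr) =
          (β, (toP t).1, Function.update (toP t).2 jr ((toP t).2 jr + 1)) := M3 jr β _ _
      show toP (Function.update t (Sum.inr jr) (t (Sum.inr jr) + 1)) ∈ (emb β) ⁻¹' T
      rw [show t (Sum.inr jr) = (toP t).2 jr from rfl, updr]
      show (β, (toP t).1, Function.update (toP t).2 jr ((toP t).2 jr + 1)) ∈ T
      rw [← h3]
      exact h2
  have hdown : ∀ t ∈ T', t ∉ F' → ∀ j, 2 ≤ t j → Function.update t j (t j - 1) ∈ T' := by
    intro t ht htF j hj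
    have h1 : emb β (toP t) ∈ T := ht
    cases j with
    | inl jl =>
      have h2 : gmul (Ldown β jl) (emb β (toP t)) ∈ T := by
        by_contra h
        exact htF (Set.mem_iUnion.2 ⟨jl, Or.inl (Or.inl (Or.inr ⟨h1, h⟩))⟩)
      have h3 : gmul (Ldown β jl) (emb β (toP t)) =
          (β, Function.update (toP t).1 jl ((toP t).1 jl - 1), (toP t).2) :=
        M2 β jl _ _ hj
      show toP (Function.update t (Sum.inl jl) (t (Sum.inl jl) - 1)) ∈ (emb β) ⁻¹' T
      rw [show t (Sum.inl jl) = (toP t).1 jl from rfl, updl]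
      show (β, Function.update (toP t).1 jl ((toP t).1 jl - 1), (toP t).2) ∈ T
      rw [← h3]
      exact h2
    | inr jr =>
      have h2 : gmul (emb β (toP t)) (Rdown jr) ∈ T := by
        by_contra h
        exact htF (Set.mem_iUnion.2 ⟨jr, Or.inr ⟨h1, h⟩⟩)
      have h3 : gmul (emb β (toP t)) (Rdown jr) =
          (β, (toP t).1, Function.update (toP t).2 jr ((toP t).2 jr - 1)) :=
        M4 jr β _ _ hj
      show toP (Function.update t (Sum.inr jr) (t (Sum.inr jr) - 1)) ∈ (emb β) ⁻¹' T
      rw [show t (Sum.inr jr) = (toP t).2 jr from rfl, updr]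
      show (β, (toP t).1, Function.update (toP t).2 jr ((toP t).2 jr - 1)) ∈ T
      rw [← h3]
      exact h2
  have hcof : (T'ᶜ).Finite :=
    grid (i₀ := Sum.inl j0) (i₁ := Sum.inr j0) (by simp) hT'inf hF'fin hup hdown
  refine (hcof.image toP).subset ?_
  intro p hp
  refine ⟨ofP p, ?_, to_of p⟩
  show ¬ toP (ofP p) ∈ (emb β) ⁻¹' T
  rw [to_of]
  exact hp

lemma compl_T_finite (hn : n ≠ 0) (T : Set (Gel n))
    (hstabL : ∀ a : Gel n, {t : Gel n | t ∈ T ∧ gmul a t ∉ T}.Finite)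
    (hstabR : ∀ a : Gel n, {t : Gel n | t ∈ T ∧ gmul t a ∉ T}.Finite)
    (hTinf : T.Infinite) : (Tᶜ).Finite := by
  have hall := slices_infinite T hstabR hTinf
  have hsub : Tᶜ ⊆ ⋃ β : Equiv.Perm (Fin n), emb β '' (((emb β) ⁻¹' T)ᶜ) := by
    intro g hg
    exact Set.mem_iUnion.2 ⟨g.1, (g.2.1, g.2.2), hg, rfl⟩
  exact (Set.finite_iUnion fun β =>
    (slice_cofinite hn T hstabL hstabR β (hall β)).image _).subset hsub



variable {n : ℕ}

lemma gmul0_some (a b : Gel n) : gmul0 (some a) (some b) = some (gmul a b) := rfl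

lemma gmul0_none_right (a : Option (Gel n)) : gmul0 a none = none := by cases a <;> rfl

lemma gmul0_none_left (a : Option (Gel n)) : gmul0 none a = none := rfl

lemma iso_of_mem_finite_open {X : Type*} [TopologicalSpace X] [T1Space X] {O : Set X}
    (hO : IsOpen O) (hfin : O.Finite) {x : X} (hx : x ∈ O) : IsOpen ({x} : Set X) := by
  have h1 : IsOpen (O \ (O \ {x})) := hO.sdiff ((hfin.subset Set.diff_subset).isClosed)
  have h2 : O \ (O \ {x}) = {x} := by
    ext y
    simp only [Set.mem_diff, Set.mem_singleton_iff]
    constructor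
    · rintro ⟨hy, hy2⟩
      by_contra hne
      exact hy2 ⟨hy, hne⟩
    · rintro rfl
      exact ⟨hx, fun h => h.2 rfl⟩
  rwa [h2] at h1

lemma compact_finite {X : Type*} [TopologicalSpace X] {C : Set X} (hC : IsCompact C)
    (hiso : ∀ x ∈ C, IsOpen ({x} : Set X)) : C.Finite := by
  obtain ⟨t, ht⟩ := hC.elim_finite_subcover (fun x : C => ({x.1} : Set X))
    (fun x => hiso _ x.2) (fun y hy => Set.mem_iUnion.2 ⟨⟨y, hy⟩, rfl⟩)
  exact (t.finite_toSet.biUnion fun x _ => Set.finite_singleton _).subset ht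

variable [TopologicalSpace (Option (Gel n))] [T2Space (Option (Gel n))]

lemma exists_isolated [LocallyCompactSpace (Option (Gel n))] :
    ∃ c : Gel n, IsOpen ({some c} : Set (Option (Gel n))) := by
  classical
  have hSopen : IsOpen {x : Option (Gel n) | x ≠ none} := isOpen_ne
  haveI : LocallyCompactSpace {x : Option (Gel n) | x ≠ none} := hSopen.locallyCompactSpace
  haveI : Nonempty {x : Option (Gel n) | x ≠ none} :=
    ⟨⟨some (1, (fun _ => 1), (fun _ => 1)), by simp⟩⟩
  obtain ⟨x0, hx0⟩ := nonempty_interior_of_iUnion_of_closed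
    (f := fun x : {x : Option (Gel n) | x ≠ none} => ({x} : Set {x : Option (Gel n) | x ≠ none}))
    (fun x => isClosed_singleton) (Set.iUnion_of_singleton _)
  obtain ⟨y, hy⟩ := hx0
  have hy2 : y ∈ ({x0} : Set {x : Option (Gel n) | x ≠ none}) := interior_subset hy
  have hy3 : y = x0 := hy2
  have hx0mem : x0 ∈ interior ({x0} : Set {x : Option (Gel n) | x ≠ none}) := hy3 ▸ hy
  have hopen : IsOpen ({x0} : Set {x : Option (Gel n) | x ≠ none}) := by
    have h : interior ({x0} : Set {x : Option (Gel n) | x ≠ none}) = {x0} :=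
      Set.Subset.antisymm interior_subset (Set.singleton_subset_iff.2 hx0mem)
    rw [← h]
    exact isOpen_interior
  have himg := hSopen.isOpenMap_subtype_val _ hopen
  rw [Set.image_singleton] at himg
  obtain ⟨c, hc⟩ := Option.ne_none_iff_exists'.1 x0.2
  exact ⟨c, by rwa [hc] at himg⟩

lemma all_isolated [LocallyCompactSpace (Option (Gel n))]
    (hsep : ∀ a : Option (Gel n),
      Continuous (fun x => gmul0 a x) ∧ Continuous (fun x => gmul0 x a)) :
    ∀ b : Gel n, IsOpen ({some b} : Set (Option (Gel n))) := by
  obtain ⟨c, hc⟩ := exists_isolated (n := n)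
  have hA : ∀ d : Gel n, d.2.2 = gone n → IsOpen ({some d} : Set (Option (Gel n))) := by
    intro d hd
    obtain ⟨a, ha⟩ := M6 c d hd
    have hOopen : IsOpen ((fun x => gmul0 (some a) x) ⁻¹' {some c}) :=
      IsOpen.preimage (hsep (some a)).1 hc
    have hOfin : ((fun x => gmul0 (some a) x) ⁻¹' {some c}).Finite := by
      have hsub : (fun x => gmul0 (some a) x) ⁻¹' {some c} ⊆
          Option.some '' {x : Gel n | gmul a x = c} := by
        intro x hx
        match x with
        | none => simp [gmul0_none_right] at hx
        | some b =>
          refine ⟨b, ?_, rfl⟩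
          have hb : gmul0 (some a) (some b) = some c := hx
          rw [gmul0_some] at hb
          exact Option.some_injective _ hb
      exact ((ftL a c).image _).subset hsub
    refine iso_of_mem_finite_open hOopen hOfin (Set.mem_preimage.2 ?_)
    rw [show gmul0 (some a) (some d) = some c from by rw [gmul0_some, ha]]
    rfl
  intro b
  obtain ⟨a', P, ha'⟩ := M7 b
  have hd : IsOpen ({some ((b.1, fun _ => P, gone n) : Gel n)} : Set (Option (Gel n))) :=
    hA (b.1, fun _ => P, gone n) rfl
  have hOopen : IsOpen ((fun x => gmul0 x (some a')) ⁻¹'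
      {some ((b.1, fun _ => P, gone n) : Gel n)}) :=
    IsOpen.preimage (hsep (some a')).2 hd
  have hOfin : ((fun x => gmul0 x (some a')) ⁻¹'
      {some ((b.1, fun _ => P, gone n) : Gel n)}).Finite := by
    have hsub : (fun x => gmul0 x (some a')) ⁻¹' {some ((b.1, fun _ => P, gone n) : Gel n)} ⊆
        Option.some '' {x : Gel n | gmul x a' = (b.1, fun _ => P, gone n)} := by
      intro x hx
      match x with
      | none => simp [gmul0_none_left] at hx
      | some g =>
        refine ⟨g, ?_, rfl⟩
        have hb : gmul0 (some g) (some a') = some ((b.1, fun _ => P, gone n) : Gel n) := hx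
        rw [gmul0_some] at hb
        exact Option.some_injective _ hb
    exact ((ftR a' _).image _).subset hsub
  refine iso_of_mem_finite_open hOopen hOfin (Set.mem_preimage.2 ?_)
  rw [show gmul0 (some b) (some a') = some ((b.1, fun _ => P, gone n) : Gel n) from by
    rw [gmul0_some, ha']]
  rfl

end CUF

/-- Corollary 1.8: in a Hausdorff locally compact non-discrete semitopological
topology on `S⁰`, every open neighbourhood of the zero has finite
complement. -/
theorem compl_U_finite {n : ℕ} [TopologicalSpace (Option (Gel n))]
    [T2Space (Option (Gel n))] [LocallyCompactSpace (Option (Gel n))]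
    (hsep : ∀ a : Option (Gel n),
      Continuous (fun x => gmul0 a x) ∧ Continuous (fun x => gmul0 x a))
    (hnd : ¬ DiscreteTopology (Option (Gel n)))
    (U : Set (Option (Gel n))) (hU : IsOpen U) (h0 : none ∈ U) :
    (Uᶜ).Finite := by
  classical
  rcases eq_or_ne n 0 with rfl | hn
  · exact Set.toFinite _
  have hiso := CUF.all_isolated hsep
  have hnone : ¬ IsOpen ({(none : Option (Gel n))} : Set (Option (Gel n))) := by
    intro h
    apply hnd
    rw [discreteTopology_iff_isOpen_singleton]
    intro a
    cases a with
    | none => exact h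
    | some b => exact hiso b
  obtain ⟨K, hKc, hKn⟩ := exists_compact_mem_nhds (none : Option (Gel n))
  have hKint : (none : Option (Gel n)) ∈ interior K := mem_interior_iff_mem_nhds.2 hKn
  have hKW : ∀ W : Set (Option (Gel n)), IsOpen W → none ∈ W → (K \ W).Finite := by
    intro W hW hnW
    apply CUF.compact_finite (hKc.diff hW)
    intro x hx
    match x with
    | none => exact absurd hx (by simp [hnW])
    | some b => exact hiso b
  set T : Set (Gel n) := {g | some g ∈ interior K} with hT
  have hTinf : T.Infinite := by
    intro hfin
    apply hnone
    have heq : interior K \ (Option.some '' T) = {none} := by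
      ext x
      simp only [Set.mem_diff, Set.mem_singleton_iff]
      constructor
      · rintro ⟨hx1, hx2⟩
        match x with
        | none => rfl
        | some g => exact absurd ⟨g, hx1, rfl⟩ hx2
      · rintro rfl
        refine ⟨hKint, ?_⟩
        rintro ⟨g, _, hg⟩
        exact Option.some_ne_none g hg
    have hop : IsOpen (interior K \ (Option.some '' T)) :=
      isOpen_interior.sdiff (hfin.image _).isClosed
    rwa [heq] at hop
  have hstabL : ∀ a : Gel n, {t : Gel n | t ∈ T ∧ gmul a t ∉ T}.Finite := by
    intro a
    have hVopen : IsOpen ((fun x => gmul0 (some a) x) ⁻¹' interior K) :=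
      IsOpen.preimage (hsep (some a)).1 isOpen_interior
    have hVn : (none : Option (Gel n)) ∈ (fun x => gmul0 (some a) x) ⁻¹' interior K := by
      show gmul0 (some a) none ∈ interior K
      rw [CUF.gmul0_none_right]
      exact hKint
    apply ((hKW _ hVopen hVn).preimage (Option.some_injective _).injOn).subset
    rintro t ⟨ht1, ht2⟩
    refine ⟨interior_subset ht1, ?_⟩
    intro hv
    apply ht2
    have hg : gmul0 (some a) (some t) ∈ interior K := hv
    rw [CUF.gmul0_some] at hg
    exact hg
  have hstabR : ∀ a : Gel n, {t : Gel n | t ∈ T ∧ gmul t a ∉ T}.Finite := by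
    intro a
    have hVopen : IsOpen ((fun x => gmul0 x (some a)) ⁻¹' interior K) :=
      IsOpen.preimage (hsep (some a)).2 isOpen_interior
    have hVn : (none : Option (Gel n)) ∈ (fun x => gmul0 x (some a)) ⁻¹' interior K := by
      show gmul0 none (some a) ∈ interior K
      rw [CUF.gmul0_none_left]
      exact hKint
    apply ((hKW _ hVopen hVn).preimage (Option.some_injective _).injOn).subset
    rintro t ⟨ht1, ht2⟩
    refine ⟨interior_subset ht1, ?_⟩
    intro hv
    apply ht2
    have hg : gmul0 (some t) (some a) ∈ interior K := hv
    rw [CUF.gmul0_some] at hg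
    exact hg
  have hTcof : (Tᶜ).Finite := CUF.compl_T_finite hn T hstabL hstabR hTinf
  have hsub : Uᶜ ⊆ (K \ U) ∪ Option.some '' (Tᶜ) := by
    intro x hx
    by_cases hxK : x ∈ K
    · exact Or.inl ⟨hxK, hx⟩
    · right
      match x with
      | none => exact absurd h0 hx
      | some g =>
        refine ⟨g, ?_, rfl⟩
        intro hgT
        exact hxK (interior_subset hgT)
  exact ((hKW U hU h0).union (hTcof.image _)).subset hsub
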